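/- Let k be a natural number and let G be a simple graph and P a set of at most 4k vertices of G such that: (i) every vertex of G has degree at most 6k + 6; (ii) G contains no three distinct vertices u, x, y with N(x) = N(y) = {u}; (iii) G − P contains no path on 4 vertices; and (iv) every connected component of G − P contains a vertex with a neighbor in P. Then G has at most 96k² + 96k edges. -/

import Mathlib

open SimpleGraph Finset

section Aux
variable {V : Type*} [Fintype V] (G : SimpleGraph V) (P : Finset V)

/-- vertices outside `P` with a neighbor in `P` -/
noncomputable def Akern : Finset V :=
  letI := Classical.decEq V
  letI : DecidableRel G.Adj := Classical.decRel _
  (P.biUnion fun p => G.neighborFinset p).filter fun v => v ∉ P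

/-- inner neighbors (outside `P`) of a vertex -/
noncomputable def Mv (x : V) : Finset V :=
  letI := Classical.decEq V
  letI : DecidableRel G.Adj := Classical.decRel _
  (G.neighborFinset x).filter fun v => v ∉ P

lemma mem_Akern {a : V} : a ∈ Akern G P ↔ (∃ p ∈ P, G.Adj p a) ∧ a ∉ P := by
  classical
  simp only [Akern, Finset.mem_filter, Finset.mem_biUnion, mem_neighborFinset]

lemma mem_Mv {x v : V} : v ∈ Mv G P x ↔ G.Adj x v ∧ v ∉ P := by
  classical
  simp only [Mv, Finset.mem_filter, mem_neighborFinset]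

variable {G P}

set_option linter.unusedSectionVars false

/-- no 4-vertex path avoiding P -/
lemma path4 (hP4 : ∀ ⦃a b : V⦄ (p : G.Walk a b), p.IsPath →
      (∀ x ∈ p.support, x ∉ P) → p.length + 1 ≠ 4)
    {a b c d : V} (hab : G.Adj a b) (hbc : G.Adj b c) (hcd : G.Adj c d)
    (ha : a ∉ P) (hb : b ∉ P) (hc : c ∉ P) (hd : d ∉ P)
    (hac : a ≠ c) (had : a ≠ d) (hbd : b ≠ d) : False := by
  refine hP4 (Walk.cons hab (Walk.cons hbc (Walk.cons hcd Walk.nil))) ?_ ?_ rfl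
  · rw [Walk.isPath_def]
    simp [hab.ne, hbc.ne, hcd.ne, hac, had, hbd]
  · intro x hx
    simp only [Walk.support_cons, Walk.support_nil, List.mem_cons] at hx
    rcases hx with rfl | rfl | rfl | hx | hx <;> simp_all

set_option linter.unusedSectionVars false

/-- key local lemma: two inner neighbors of `a`, one with a stray inner neighbor -/
lemma keyK (hP4 : ∀ ⦃a b : V⦄ (p : G.Walk a b), p.IsPath →
      (∀ x ∈ p.support, x ∉ P) → p.length + 1 ≠ 4)
    {a u x w : V} (ha : a ∉ P) (hu : u ∉ P) (hx : x ∉ P) (hw : w ∉ P)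
    (hau : G.Adj a u) (hax : G.Adj a x) (hux : u ≠ x)
    (huw : G.Adj u w) (hwa : w ≠ a) (hwx : w ≠ x) : False :=
  path4 hP4 huw.symm hau.symm hax hw hu ha hx hwa hwx hux

/-- every pure vertex has a close-by `Akern` vertex -/
lemma findA (hP4 : ∀ ⦃a b : V⦄ (p : G.Walk a b), p.IsPath →
      (∀ x ∈ p.support, x ∉ P) → p.length + 1 ≠ 4)
    (hcomp : ∀ x : V, x ∉ P → ∃ (y : V) (w : G.Walk x y),
      (∀ z ∈ w.support, z ∉ P) ∧ ∃ p ∈ P, G.Adj y p)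
    {u v : V} (huv : G.Adj u v) (hu : u ∉ P) (hv : v ∉ P)
    (hua : u ∉ Akern G P) (hva : v ∉ Akern G P) :
    ∃ y ∈ Akern G P, G.Adj y u ∨ G.Adj y v := by
  classical
  obtain ⟨y, w, hw, p, hp, hyp⟩ := hcomp u hu
  have hyP : y ∉ P := hw y w.end_mem_support
  have hyA : y ∈ Akern G P := (mem_Akern G P).mpr ⟨⟨p, hp, hyp.symm⟩, hyP⟩
  -- pass to a path
  obtain ⟨q, hq, hqsub⟩ : ∃ q : G.Walk u y, q.IsPath ∧ ∀ z ∈ q.support, z ∉ P :=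
    ⟨w.toPath, w.toPath.2, fun z hz => hw z (Walk.support_toPath_subset w hz)⟩
  have hyu : y ≠ u := fun h => hua (h ▸ hyA)
  have hyv : y ≠ v := fun h => hva (h ▸ hyA)
  match q, hq, hqsub with
  | Walk.nil, _, _ => exact absurd rfl hyu.symm
  | Walk.cons h Walk.nil, _, hs => exact ⟨y, hyA, Or.inl h.symm⟩
  | Walk.cons (v := m) h (Walk.cons h2 Walk.nil), hq, hs =>
      have hm : m ∉ P := hs m (by simp)
      by_cases hvm : v = m
      · exact ⟨y, hyA, Or.inr (hvm ▸ h2).symm⟩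
      · -- P4 : v - u - m - y
        have hmy : m ≠ y := h2.ne
        have huy : u ≠ y := hyu.symm
        exact (path4 hP4 huv.symm h h2 hv hu hm hyP hvm hyv.symm huy).elim
  | Walk.cons (v := b) h (Walk.cons (v := c) h2 (Walk.cons (v := d) h3 r)), hq, hs =>
      -- prefix is a 4-vertex path avoiding P
      have hb : b ∉ P := hs b (by simp)
      have hc : c ∉ P := hs c (by simp)
      have hd : d ∉ P := hs d (by simp [Walk.support_cons])
      have hnd := hq.support_nodup
      simp only [Walk.support_cons, List.nodup_cons, List.mem_cons] at hnd
      exact (path4 hP4 h h2 h3 hu hb hc hd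
        (fun e => hnd.1 (Or.inr (Or.inl e)))
        (fun e => hnd.1 (Or.inr (Or.inr (e ▸ r.start_mem_support))))
        (fun e => hnd.2.1 (Or.inr (e ▸ r.start_mem_support)))).elim

variable (G P) in
/-- charging condition for an edge `{a,b}` charged to `a` -/
def condC (a b : V) : Prop :=
  b ∉ Akern G P ∨ (Mv G P b).card ≠ 1 ∨ (Mv G P a).card = 1

variable (G P) in
/-- charging relation: edge `e` may be charged to `a` -/
def Rrel (e : Sym2 V) (a : V) : Prop :=
  a ∈ Akern G P ∧
    ((∃ b, e = s(a, b) ∧ G.Adj a b ∧ b ∉ P ∧ condC G P a b) ∨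
     (∃ u w, e = s(u, w) ∧ G.Adj u w ∧ u ∉ P ∧ w ∉ P ∧
        u ∉ Akern G P ∧ w ∉ Akern G P ∧ G.Adj a u))

variable (G P) in
/-- the fiber of the charging relation at `a` -/
noncomputable def Sfib (a : V) : Finset (Sym2 V) :=
  letI := Classical.decEq V
  letI : DecidablePred fun e => Rrel G P e a := Classical.decPred _
  Finset.univ.filter fun e => Rrel G P e a

lemma mem_Sfib {a : V} {e : Sym2 V} : e ∈ Sfib G P a ↔ Rrel G P e a := by
  classical
  simp [Sfib]

lemma pure_nbr {b z : V} (hbP : b ∉ P) (hbA : b ∉ Akern G P) (h : G.Adj b z) :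
    z ∉ P := fun hz => hbA ((mem_Akern G P).mpr ⟨⟨z, hz, h.symm⟩, hbP⟩)

lemma twin_eq (htwin : ¬ ∃ u x y : V, x ≠ y ∧ x ≠ u ∧ y ≠ u ∧
      G.neighborSet x = {u} ∧ G.neighborSet y = {u})
    {u b c : V} (hb : G.neighborSet b = {u}) (hc : G.neighborSet c = {u})
    (hbu : b ≠ u) (hcu : c ≠ u) : b = c :=
  by_contra fun h => htwin ⟨u, b, c, h, hbu, hcu, hb, hc⟩

lemma nbhd_singleton {b a : V} (hbP : b ∉ P) (hbA : b ∉ Akern G P)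
    (hba : G.Adj b a) (h : ∀ z, G.Adj b z → z ∉ P → z = a) :
    G.neighborSet b = {a} := by
  ext z
  simp only [mem_neighborSet, Set.mem_singleton_iff]
  exact ⟨fun hz => h z hz (pure_nbr hbP hbA hz), fun hz => hz ▸ hba⟩

/-- every inner edge can be charged somewhere -/
lemma exists_R (hP4 : ∀ ⦃a b : V⦄ (p : G.Walk a b), p.IsPath →
      (∀ x ∈ p.support, x ∉ P) → p.length + 1 ≠ 4)
    (hcomp : ∀ x : V, x ∉ P → ∃ (y : V) (w : G.Walk x y),
      (∀ z ∈ w.support, z ∉ P) ∧ ∃ p ∈ P, G.Adj y p)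
    {u v : V} (huv : G.Adj u v) (hu : u ∉ P) (hv : v ∉ P) :
    ∃ a, Rrel G P s(u, v) a := by
  classical
  by_cases huA : u ∈ Akern G P
  · by_cases hc : condC G P u v
    · exact ⟨u, huA, Or.inl ⟨v, rfl, huv, hv, hc⟩⟩
    · simp only [condC, not_or, not_not, not_ne_iff] at hc
      obtain ⟨hvA, hv1, hu1⟩ := hc
      exact ⟨v, hvA, Or.inl ⟨u, Sym2.eq_swap, huv.symm, hu,
        Or.inr (Or.inr hv1)⟩⟩
  · by_cases hvA : v ∈ Akern G P
    · exact ⟨v, hvA, Or.inl ⟨u, Sym2.eq_swap, huv.symm, hu, Or.inl huA⟩⟩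
    · obtain ⟨y, hyA, hy⟩ := findA hP4 hcomp huv hu hv huA hvA
      rcases hy with h | h
      · exact ⟨y, hyA, Or.inr ⟨u, v, rfl, huv, hu, hv, huA, hvA, h⟩⟩
      · exact ⟨y, hyA, Or.inr ⟨v, u, Sym2.eq_swap, huv.symm, hv, hu, hvA, huA, h⟩⟩

lemma fiber_le_three
    (htwin : ¬ ∃ u x y : V, x ≠ y ∧ x ≠ u ∧ y ≠ u ∧
      G.neighborSet x = {u} ∧ G.neighborSet y = {u})
    (hP4 : ∀ ⦃a b : V⦄ (p : G.Walk a b), p.IsPath →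
      (∀ x ∈ p.support, x ∉ P) → p.length + 1 ≠ 4)
    (a : V) : (Sfib G P a).card ≤ 3 := by
  classical
  by_cases haA : a ∈ Akern G P
  swap
  · have : Sfib G P a = ∅ :=
      Finset.eq_empty_of_forall_notMem fun e he => haA (mem_Sfib.mp he).1
    simp [this]
  obtain ⟨⟨p, hp, hpa⟩, haP⟩ := (mem_Akern G P).mp haA
  set M := Mv G P a with hMdef
  have key : ∀ u x w : V, u ∈ M → x ∈ M → u ≠ x → G.Adj u w → w ∉ P →
      w = a ∨ w = x := by
    intro u x w hu hx hux huw hwP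
    by_contra hcon
    push_neg at hcon
    rw [hMdef, mem_Mv] at hu hx
    exact keyK hP4 haP hu.2 hx.2 hwP hu.1 hx.1 hux huw hcon.1 hcon.2
  rcases lt_or_ge M.card 3 with h3 | h3
  · -- at most two inner neighbors
    obtain hc0 | hc1 | hc2 : M.card = 0 ∨ M.card = 1 ∨ M.card = 2 := by omega
    · -- no inner neighbors: fiber is empty
      have hM : M = ∅ := Finset.card_eq_zero.mp hc0
      have : Sfib G P a = ∅ := by
        apply Finset.eq_empty_of_forall_notMem
        intro e he
        rcases (mem_Sfib.mp he).2 with ⟨b, _, hab, hbP, _⟩ |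
          ⟨u, w, _, _, huP, _, _, _, hau⟩
        · have : b ∈ M := (mem_Mv G P).mpr ⟨hab, hbP⟩
          simp [hM] at this
        · have : u ∈ M := (mem_Mv G P).mpr ⟨hau, huP⟩
          simp [hM] at this
      simp [this]
    · -- exactly one inner neighbor u0
      obtain ⟨u0, hM⟩ := Finset.card_eq_one.mp hc1
      have hu0M : u0 ∈ M := by simp [hM]
      obtain ⟨hau0, hu0P⟩ := (mem_Mv G P).mp hu0M
      have claim : ∀ e ∈ Sfib G P a, e ≠ s(a, u0) →
          ∃ w, e = s(u0, w) ∧ w ≠ u0 ∧ G.neighborSet w = {u0} := by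
        intro e he hne
        rcases (mem_Sfib.mp he).2 with ⟨b, heq, hab, hbP, _⟩ |
          ⟨u, w, heq, huw, huP, hwP, huA, hwA, hau⟩
        · have : b ∈ M := (mem_Mv G P).mpr ⟨hab, hbP⟩
          rw [hM, Finset.mem_singleton] at this
          exact absurd (this ▸ heq) hne
        · have huM : u ∈ M := (mem_Mv G P).mpr ⟨hau, huP⟩
          rw [hM, Finset.mem_singleton] at huM
          rw [huM] at huw heq
          have hwnb : ∀ z, G.Adj w z → z ∉ P → z = u0 := by
            intro z hz hzP
            by_contra hne2
            have hza : z ≠ a := by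
              rintro rfl
              have : w ∈ M := (mem_Mv G P).mpr ⟨hz.symm, hwP⟩
              rw [hM, Finset.mem_singleton] at this
              exact huw.ne' this
            exact path4 hP4 hau0 huw hz haP hu0P hwP hzP
              (Ne.symm fun h => hwA (h ▸ haA)) hza.symm (Ne.symm hne2)
          exact ⟨w, heq, huw.ne', nbhd_singleton hwP hwA huw.symm hwnb⟩
      have hsub : Sfib G P a ⊆
          insert s(a, u0) ((Sfib G P a).filter (· ≠ s(a, u0))) := by
        intro e he
        by_cases h : e = s(a, u0) <;> simp [h, he, Finset.mem_filter]
      have hfil : ((Sfib G P a).filter (· ≠ s(a, u0))).card ≤ 1 := by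
        apply Finset.card_le_one.mpr
        intro e he e' he'
        rw [Finset.mem_filter] at he he'
        obtain ⟨w, heq, hwu, hwnb⟩ := claim e he.1 he.2
        obtain ⟨w', heq', hwu', hwnb'⟩ := claim e' he'.1 he'.2
        rw [heq, heq', twin_eq htwin hwnb hwnb' hwu hwu']
      calc (Sfib G P a).card ≤ _ := Finset.card_le_card hsub
        _ ≤ _ + _ := Finset.card_insert_le _ _
        _ ≤ 3 := by omega
    · -- exactly two inner neighbors u0, v0
      obtain ⟨u0, v0, huv0, hM⟩ := Finset.card_eq_two.mp hc2
      have hu0M : u0 ∈ M := by simp [hM]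
      have hv0M : v0 ∈ M := by simp [hM]
      have hsub : Sfib G P a ⊆ {s(a, u0), s(a, v0), s(u0, v0)} := by
        intro e he
        rcases (mem_Sfib.mp he).2 with ⟨b, heq, hab, hbP, _⟩ |
          ⟨u, w, heq, huw, huP, hwP, huA, hwA, hau⟩
        · have : b ∈ M := (mem_Mv G P).mpr ⟨hab, hbP⟩
          rw [hM] at this
          simp only [Finset.mem_insert, Finset.mem_singleton] at this ⊢
          rcases this with rfl | rfl
          · exact Or.inl heq
          · exact Or.inr (Or.inl heq)
        · have huM : u ∈ M := (mem_Mv G P).mpr ⟨hau, huP⟩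
          have hwa : w ≠ a := fun h => hwA (h ▸ haA)
          rw [hM] at huM
          simp only [Finset.mem_insert, Finset.mem_singleton] at huM ⊢
          rcases huM with rfl | rfl
          · rcases key u v0 w hu0M hv0M huv0 huw hwP with h | h
            · exact absurd h hwa
            · exact Or.inr (Or.inr (h ▸ heq))
          · rcases key u u0 w hv0M hu0M huv0.symm huw hwP with h | h
            · exact absurd h hwa
            · subst h
              exact Or.inr (Or.inr (heq.trans Sym2.eq_swap))
      calc (Sfib G P a).card ≤ _ := Finset.card_le_card hsub
        _ ≤ 3 := by
          apply le_trans (Finset.card_insert_le _ _)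
          have := Finset.card_insert_le s(a, v0) ({s(u0, v0)} : Finset (Sym2 V))
          simp only [Finset.card_singleton] at this ⊢
          omega
  · -- at least three inner neighbors: star with center a
    have claim : ∀ e ∈ Sfib G P a, ∃ b, e = s(a, b) ∧ b ≠ a ∧
        G.neighborSet b = {a} := by
      intro e he
      have pick2 : ∀ b : V, ∃ x y, x ∈ M ∧ y ∈ M ∧ x ≠ b ∧ y ≠ b ∧ x ≠ y := by
        intro b
        have h2b : 1 < (M.erase b).card := by
          rcases Finset.decidableMem b M with h | h
          · rw [Finset.erase_eq_of_notMem h]; omega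
          · have := Finset.card_erase_of_mem h; omega
        obtain ⟨x, hx, y, hy, hxy⟩ := Finset.one_lt_card.mp h2b
        exact ⟨x, y, Finset.mem_of_mem_erase hx, Finset.mem_of_mem_erase hy,
          (Finset.mem_erase.mp hx).1, (Finset.mem_erase.mp hy).1, hxy⟩
      rcases (mem_Sfib.mp he).2 with ⟨b, heq, hab, hbP, hcond⟩ |
        ⟨u, w, heq, huw, huP, hwP, huA, hwA, hau⟩
      · have hbM : b ∈ M := (mem_Mv G P).mpr ⟨hab, hbP⟩
        obtain ⟨x, y, hxM, hyM, hxb, hyb, hxy⟩ := pick2 b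
        have hMb : ∀ z, G.Adj b z → z ∉ P → z = a := by
          intro z hz hzP
          rcases key b x z hbM hxM (fun h => hxb h.symm) hz hzP with h | h1
          · exact h
          rcases key b y z hbM hyM (fun h => hyb h.symm) hz hzP with h | h2
          · exact h
          · exact absurd (h1.symm.trans h2) hxy
        have hMvb : Mv G P b = {a} := by
          apply Finset.eq_singleton_iff_unique_mem.mpr
          exact ⟨(mem_Mv G P).mpr ⟨hab.symm, haP⟩,
            fun z hz => hMb z ((mem_Mv G P).mp hz).1 ((mem_Mv G P).mp hz).2⟩
        have hbA : b ∉ Akern G P := by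
          rcases hcond with h | h | h
          · exact h
          · exact absurd (by rw [hMvb]; simp) h
          · rw [← hMdef] at h; omega
        exact ⟨b, heq, hab.ne', nbhd_singleton hbP hbA hab.symm hMb⟩
      · have huM : u ∈ M := (mem_Mv G P).mpr ⟨hau, huP⟩
        have hwa : w ≠ a := fun h => hwA (h ▸ haA)
        obtain ⟨x, y, hxM, hyM, hxu, hyu, hxy⟩ := pick2 u
        rcases key u x w huM hxM (fun h => hxu h.symm) huw hwP with h | h1
        · exact absurd h hwa
        rcases key u y w huM hyM (fun h => hyu h.symm) huw hwP with h | h2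
        · exact absurd h hwa
        · exact absurd (h1.symm.trans h2) hxy
    have : (Sfib G P a).card ≤ 1 := by
      apply Finset.card_le_one.mpr
      intro e he e' he'
      obtain ⟨b, heq, hba, hbn⟩ := claim e he
      obtain ⟨b', heq', hba', hbn'⟩ := claim e' he'
      rw [heq, heq', twin_eq htwin hbn hbn' hba hba']
    omega

end Aux

/-- In the 4-PVC kernel setting: if `|P| ≤ 4k`, every degree is at most `6k + 6`, `G` has no
degree-one false twins, `G − P` has no path on 4 vertices, and every connected component of
`G − P` has a vertex with a neighbor in `P`, then `G` has at most `96k² + 96k` edges. -/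
theorem total_edges_4pvc {V : Type*} [Fintype V] (G : SimpleGraph V) (k : ℕ)
    (P : Finset V) (hP : P.card ≤ 4 * k)
    (hdeg : ∀ x : V, (G.neighborSet x).ncard ≤ 6 * k + 6)
    (htwin : ¬ ∃ u x y : V, x ≠ y ∧ x ≠ u ∧ y ≠ u ∧
      G.neighborSet x = {u} ∧ G.neighborSet y = {u})
    (hP4free : ∀ ⦃a b : V⦄ (p : G.Walk a b), p.IsPath →
      (∀ x ∈ p.support, x ∉ P) → p.length + 1 ≠ 4)
    (hcomp : ∀ x : V, x ∉ P → ∃ (y : V) (w : G.Walk x y),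
      (∀ z ∈ w.support, z ∉ P) ∧ ∃ p ∈ P, G.Adj y p) :
    G.edgeSet.ncard ≤ 96 * k ^ 2 + 96 * k := by
  classical
  have hdeg' : ∀ x : V, G.degree x ≤ 6 * k + 6 := by
    intro x
    have := hdeg x
    rwa [Set.ncard_eq_toFinset_card', ← neighborFinset_def] at this
  have hsum : ∑ p ∈ P, G.degree p ≤ 4 * k * (6 * k + 6) := by
    calc ∑ p ∈ P, G.degree p ≤ P.card * (6 * k + 6) := by
          simpa using Finset.sum_le_card_nsmul P _ _ (fun p _ => hdeg' p)
      _ ≤ 4 * k * (6 * k + 6) := Nat.mul_le_mul_right _ hP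
  -- the vertices outside P with a neighbor in P
  have hAcard : (Akern G P).card ≤ 4 * k * (6 * k + 6) := by
    refine le_trans (le_trans (Finset.card_le_card ?_) Finset.card_biUnion_le) hsum
    · intro a ha
      rw [mem_Akern] at ha
      obtain ⟨⟨p, hp, hpa⟩, _⟩ := ha
      exact Finset.mem_biUnion.mpr ⟨p, hp, (mem_neighborFinset G p a).mpr hpa⟩
  set innerE : Finset (Sym2 V) := G.edgeFinset.filter (fun e => ∀ x ∈ e, x ∉ P)
    with hIdef
  set touchE : Finset (Sym2 V) := G.edgeFinset.filter (fun e => ¬ ∀ x ∈ e, x ∉ P)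
    with hTdef
  have hsplit : innerE.card + touchE.card = G.edgeFinset.card :=
    Finset.card_filter_add_card_filter_not _
  -- edges touching P
  have htouch : touchE.card ≤ 4 * k * (6 * k + 6) := by
    have hsub : touchE ⊆ P.biUnion fun p => G.incidenceFinset p := by
      intro e he
      rw [hTdef, Finset.mem_filter] at he
      obtain ⟨he1, he2⟩ := he
      push_neg at he2
      obtain ⟨x, hx, hxP⟩ := he2
      exact Finset.mem_biUnion.mpr ⟨x, hxP,
        (mem_incidenceFinset G x e).mpr ⟨(mem_edgeFinset).mp he1, hx⟩⟩
    calc touchE.card ≤ (P.biUnion fun p => G.incidenceFinset p).card :=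
          Finset.card_le_card hsub
      _ ≤ ∑ p ∈ P, (G.incidenceFinset p).card := Finset.card_biUnion_le
      _ = ∑ p ∈ P, G.degree p :=
          Finset.sum_congr rfl fun p _ => G.card_incidenceFinset_eq_degree p
      _ ≤ _ := hsum
  -- inner edges
  have hinner : innerE.card ≤ 3 * (Akern G P).card := by
    rcases innerE.eq_empty_or_nonempty with h | ⟨e0, he0⟩
    · simp [h]
    haveI : Nonempty V := Sym2.ind (fun u _ => ⟨u⟩) e0
    set f : Sym2 V → V := fun e => Classical.epsilon (Rrel G P e) with hf
    have hR : ∀ e ∈ innerE, Rrel G P e (f e) := by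
      intro e he
      rw [hIdef, Finset.mem_filter] at he
      obtain ⟨he1, he2⟩ := he
      induction e using Sym2.ind with
      | _ u v =>
        have huv : G.Adj u v := (mem_edgeFinset).mp he1
        exact Classical.epsilon_spec
          (exists_R hP4free hcomp huv (he2 u (Sym2.mem_mk_left u v))
            (he2 v (Sym2.mem_mk_right u v)))
    refine Finset.card_le_mul_card_image_of_maps_to (fun e he => (hR e he).1) 3 ?_
    intro a _
    refine le_trans (Finset.card_le_card ?_) (fiber_le_three htwin hP4free a)
    intro e he
    rw [Finset.mem_filter] at he
    exact mem_Sfib.mpr (he.2 ▸ hR e he.1)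
  have hEcard : G.edgeSet.ncard = G.edgeFinset.card := by
    rw [Set.ncard_eq_toFinset_card']
    congr 1
  have : G.edgeFinset.card ≤ 4 * (4 * k * (6 * k + 6)) := by omega
  rw [hEcard]
  refine le_trans this (le_of_eq ?_)
  ring
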